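/- For a real number a ≥ 2 and N = ⌊a⌋ − 1, one has |Σ_{1 ≤ |k| ≤ N} 1/(a−k)| ≥ log(a/2) − 1. -/

import Mathlib

theorem punctured_harmonic_sum_lower_bound (a : ℝ) (ha : 2 ≤ a) (N : ℤ) (hNdef : N = ⌊a⌋ - 1) :
    Real.log (a / 2) - 1 ≤ |∑ k ∈ (Finset.Icc (-N) N).erase 0, 1 / (a - (k : ℝ))| := by
  have hfloor : (2:ℤ) ≤ ⌊a⌋ := Int.le_floor.2 (by exact_mod_cast ha)
  have hN1 : 1 ≤ N := by omega
  have hfloor_le : ((⌊a⌋:ℤ):ℝ) ≤ a := Int.floor_le a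
  have hlt : a < (⌊a⌋:ℝ) + 1 := Int.lt_floor_add_one a
  have hNR : (N:ℝ) = (⌊a⌋:ℝ) - 1 := by exact_mod_cast hNdef
  have haN1 : 1 ≤ a - (N:ℝ) := by linarith
  have haN2 : a - (N:ℝ) < 2 := by linarith
  have hpos : ∀ k ∈ (Finset.Icc (-N) N).erase 0, 0 ≤ 1 / (a - (k:ℝ)) := by
    intro k hk
    have hk' := Finset.mem_of_mem_erase hk
    rw [Finset.mem_Icc] at hk'
    have h1 : (k:ℝ) ≤ N := by exact_mod_cast hk'.2
    have h2 : 0 < a - (k:ℝ) := by linarith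
    positivity
  set n := N.toNat with hn
  have hnN : (n:ℤ) = N := Int.toNat_of_nonneg (by omega)
  have hnR : (n:ℝ) = (N:ℝ) := by exact_mod_cast hnN
  set S := (Finset.range n).image (fun i : ℕ => (i:ℤ)+1) with hS
  have hsub : S ⊆ (Finset.Icc (-N) N).erase 0 := by
    intro k hk
    simp only [hS, Finset.mem_image, Finset.mem_range] at hk
    obtain ⟨i, hi, rfl⟩ := hk
    have hiN : (i:ℤ) < N := by omega
    refine Finset.mem_erase.2 ⟨by omega, Finset.mem_Icc.2 ⟨by omega, by omega⟩⟩
  have hsumS : ∑ k ∈ S, 1 / (a - (k:ℝ)) = ∑ i ∈ Finset.range n, 1 / (a - ((i:ℝ)+1)) := by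
    rw [hS, Finset.sum_image]
    · apply Finset.sum_congr rfl
      intro i _
      push_cast
      ring_nf
    · intro x _ y _ h
      simp only at h
      omega
  have hsub_le : ∑ k ∈ S, 1 / (a - (k:ℝ)) ≤ ∑ k ∈ (Finset.Icc (-N) N).erase 0, 1 / (a - (k:ℝ)) :=
    Finset.sum_le_sum_of_subset_of_nonneg hsub (fun k hk _ => hpos k hk)
  have htel : ∑ i ∈ Finset.range n, (Real.log (a - i) - Real.log (a - (i+1)))
      = Real.log a - Real.log (a - n) := by
    have := Finset.sum_range_sub' (fun i : ℕ => Real.log (a - i)) n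
    simpa using this
  have hterm : ∀ i ∈ Finset.range n,
      Real.log (a - i) - Real.log (a - (i+1)) ≤ 1 / (a - ((i:ℝ)+1)) := by
    intro i hi
    rw [Finset.mem_range] at hi
    have hiR : (i:ℝ) + 1 ≤ (n:ℝ) := by exact_mod_cast hi
    have h1 : 0 < a - ((i:ℝ)+1) := by rw [hnR] at hiR; linarith
    have h2 : 0 < a - (i:ℝ) := by linarith
    have hx : (0:ℝ) < (a - (i:ℝ)) / (a - ((i:ℝ)+1)) := by positivity
    have hlog := Real.log_le_sub_one_of_pos hx
    rw [Real.log_div (by linarith) (by linarith)] at hlog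
    have : (a - (i:ℝ)) / (a - ((i:ℝ)+1)) - 1 = 1 / (a - ((i:ℝ)+1)) := by
      field_simp
      ring
    linarith [hlog, this ▸ hlog]
  have hlow : Real.log a - Real.log (a - n) ≤ ∑ i ∈ Finset.range n, 1 / (a - ((i:ℝ)+1)) := by
    rw [← htel]
    exact Finset.sum_le_sum hterm
  have hlog2 : Real.log (a - (n:ℝ)) ≤ Real.log 2 := by
    apply Real.log_le_log (by rw [hnR]; linarith)
    rw [hnR]; linarith
  have hdiv : Real.log (a / 2) = Real.log a - Real.log 2 :=
    Real.log_div (by linarith) (by norm_num)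
  have habs : ∑ k ∈ (Finset.Icc (-N) N).erase 0, 1 / (a - (k:ℝ))
      ≤ |∑ k ∈ (Finset.Icc (-N) N).erase 0, 1 / (a - (k:ℝ))| := le_abs_self _
  calc Real.log (a / 2) - 1 ≤ Real.log a - Real.log (a - n) := by
        rw [hdiv]
        have : (0:ℝ) < 1 := one_pos
        linarith
    _ ≤ ∑ i ∈ Finset.range n, 1 / (a - ((i:ℝ)+1)) := hlow
    _ = ∑ k ∈ S, 1 / (a - (k:ℝ)) := hsumS.symm
    _ ≤ ∑ k ∈ (Finset.Icc (-N) N).erase 0, 1 / (a - (k:ℝ)) := hsub_le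
    _ ≤ _ := habs
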